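/- arXiv:math-ph/0012036 — 2 statements merged into one kernel-verified Lean document; each statement's English description precedes it below -/
import Mathlib

section
/- Let V be a finite-dimensional real vector space with a nondegenerate symmetric bilinear form g, and let W be a subspace with radical Rad(W) = W ∩ W^⊥ of dimension r. Then there exists a subspace L of V with dim L = r such that g restricted to Rad(W) × Rad(W) and L × L vanishes, L ∩ W = {0}, and the pairing g : Rad(W) × L → ℝ is nondegenerate (i.e., L is a 'lightlike transversal' complement dually paired with Rad(W)). -/
open Module

/-- Core lemma: given a symmetric bilinear form, a totally isotropic subspace `R`
contained in a subspace `M` on which `g` restricts nondegenerately, there is a totally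
isotropic `L ≤ M` dually paired with `R`. -/
lemma exists_dual_isotropic {V : Type*} [AddCommGroup V] [Module ℝ V]
    [FiniteDimensional ℝ V] (g : LinearMap.BilinForm ℝ V) (hsymm : g.IsSymm) :
    ∀ n : ℕ, ∀ R M : Submodule ℝ V, finrank ℝ R = n → R ≤ M →
    (∀ x ∈ R, ∀ y ∈ R, g x y = 0) → (g.restrict M).Nondegenerate →
    ∃ L : Submodule ℝ V, L ≤ M ∧ (∀ x ∈ L, ∀ y ∈ L, g x y = 0) ∧
      (∀ x ∈ R, (∀ y ∈ L, g x y = 0) → x = 0) ∧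
      (∀ y ∈ L, (∀ x ∈ R, g x y = 0) → y = 0) := by
  have hsy : ∀ x y : V, g x y = g y x := fun x y => by
    have := hsymm.eq x y; simpa using this
  intro n
  induction n with
  | zero =>
    intro R M hRrank hRM hRiso hMnd
    have hRbot : R = ⊥ := Submodule.finrank_eq_zero.mp hRrank
    refine ⟨⊥, bot_le, ?_, ?_, ?_⟩
    · intro x hx; simp at hx; simp [hx]
    · intro x hx _; rw [hRbot] at hx; simpa using hx
    · intro y hy _; simpa using hy
  | succ n ih =>
    intro R M hRrank hRM hRiso hMnd
    -- pick a nonzero e ∈ R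
    have hRne : R ≠ ⊥ := by
      intro h; rw [h] at hRrank; simp at hRrank
    obtain ⟨e, heR, hene⟩ := Submodule.exists_mem_ne_zero_of_ne_bot hRne
    have heM : e ∈ M := hRM heR
    have hee : g e e = 0 := hRiso e heR e heR
    -- find m ∈ M with g e m ≠ 0
    have : ∃ m ∈ M, g e m ≠ 0 := by
      by_contra h
      push_neg at h
      have := hMnd.1 ⟨e, heM⟩ (fun y => by
        show g e (y : V) = 0
        exact h y.1 y.2)
      exact hene (by simpa using congrArg Subtype.val this)
    obtain ⟨m, hmM, hem⟩ := this
    set f0 : V := (g e m)⁻¹ • m with hf0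
    have hef0 : g e f0 = 1 := by
      simp [hf0, smul_eq_mul, inv_mul_cancel₀ hem]
    set f : V := f0 - (g f0 f0 / 2) • e with hfdef
    have hfM : f ∈ M := M.sub_mem (M.smul_mem _ hmM) (M.smul_mem _ heM)
    have hef : g e f = 1 := by
      simp only [hfdef, map_sub, map_smul, smul_eq_mul, hef0, hee]
      ring
    have hfe : g f e = 1 := by rw [hsy]; exact hef
    have hff : g f f = 0 := by
      simp only [hfdef, map_sub, map_smul, LinearMap.sub_apply, LinearMap.smul_apply,
        smul_eq_mul, hef0, hee, hsy f0 e, hef0]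
      ring
    -- the corrected subspace M'
    set M' : Submodule ℝ V := M ⊓ LinearMap.ker (g e) ⊓ LinearMap.ker (g f) with hM'def
    have hM'mem : ∀ x : V, x ∈ M' ↔ x ∈ M ∧ g e x = 0 ∧ g f x = 0 := by
      intro x
      simp [hM'def, Submodule.mem_inf, LinearMap.mem_ker, and_assoc]
    have hM'M : M' ≤ M := le_trans inf_le_left inf_le_left
    -- the projection φ
    set φ : V →ₗ[ℝ] V := LinearMap.id - (g.flip f).smulRight e with hφdef
    have hφ : ∀ x : V, φ x = x - (g x f) • e := fun x => rfl
    -- image of R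
    set R'' : Submodule ℝ V := R.map φ with hR''def
    have hR''M' : R'' ≤ M' := by
      rintro _ ⟨x, hx, rfl⟩
      rw [hM'mem]
      refine ⟨?_, ?_, ?_⟩
      · rw [hφ]; exact M.sub_mem (hRM hx) (M.smul_mem _ heM)
      · rw [hφ]; simp only [map_sub, map_smul, smul_eq_mul, hee]
        rw [hRiso e heR x hx]; ring
      · rw [hφ]; simp only [map_sub, map_smul, smul_eq_mul, hfe]
        rw [hsy f x]; ring
    have hR''iso : ∀ x ∈ R'', ∀ y ∈ R'', g x y = 0 := by
      rintro _ ⟨x, hx, rfl⟩ _ ⟨y, hy, rfl⟩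
      simp only [hφ, map_sub, map_smul, LinearMap.sub_apply, LinearMap.smul_apply, smul_eq_mul]
      rw [hRiso x hx y hy, hRiso x hx e heR, hRiso e heR y hy, hee]
      ring
    -- rank of R''
    have hR''rank : finrank ℝ R'' = n := by
      have hψ : LinearMap.range (φ ∘ₗ R.subtype) = R'' := by
        rw [LinearMap.range_comp, Submodule.range_subtype]
      have hker : LinearMap.ker (φ ∘ₗ R.subtype) = (ℝ ∙ e).comap R.subtype := by
        ext ⟨x, hx⟩
        simp only [LinearMap.mem_ker, LinearMap.comp_apply, Submodule.subtype_apply,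
          Submodule.mem_comap, Submodule.mem_span_singleton]
        constructor
        · intro h
          rw [hφ, sub_eq_zero] at h
          exact ⟨g x f, h.symm⟩
        · rintro ⟨a, rfl⟩
          rw [hφ]
          simp [smul_eq_mul, hef]
      have h1 : finrank ℝ R'' + finrank ℝ (LinearMap.ker (φ ∘ₗ R.subtype)) = n + 1 := by
        rw [← hψ, ← hRrank]
        exact LinearMap.finrank_range_add_finrank_ker _
      have hle : (ℝ ∙ e) ≤ R := by
        rw [Submodule.span_singleton_le_iff_mem]; exact heR
      have h2 : finrank ℝ (LinearMap.ker (φ ∘ₗ R.subtype)) = 1 := by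
        rw [hker]
        rw [LinearEquiv.finrank_eq (Submodule.comapSubtypeEquivOfLe hle)]
        exact finrank_span_singleton hene
      omega
    -- nondegeneracy of restriction to M'
    have hM'nd : (g.restrict M').Nondegenerate := by
      refine (LinearMap.IsRefl.nondegenerate_iff_separatingLeft (hsymm.restrict M').isRefl).mpr ?_
      rintro ⟨v, hv⟩ h
      rw [hM'mem] at hv
      obtain ⟨hvM, hev, hfv⟩ := hv
      have hve : g v e = 0 := by rw [hsy]; exact hev
      have hvf : g v f = 0 := by rw [hsy]; exact hfv
      have : (⟨v, hvM⟩ : M) = 0 := by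
        apply hMnd.1
        rintro ⟨x, hxM⟩
        show g v x = 0
        set x' : V := x - (g x f) • e - (g x e) • f with hx'def
        have hx'M' : x' ∈ M' := by
          rw [hM'mem]
          refine ⟨M.sub_mem (M.sub_mem hxM (M.smul_mem _ heM)) (M.smul_mem _ hfM), ?_, ?_⟩
          · simp only [hx'def, map_sub, map_smul, smul_eq_mul, hee, hef]
            rw [hsy e x]; ring
          · simp only [hx'def, map_sub, map_smul, smul_eq_mul, hfe, hff]
            rw [hsy f x]; ring
        have h0 : g v x' = 0 := h ⟨x', hx'M'⟩
        have : g v x = g v x' + (g x f) * g v e + (g x e) * g v f := by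
          simp only [hx'def, map_sub, map_smul, smul_eq_mul]
          ring
        rw [this, h0, hve, hvf]; ring
      exact Subtype.ext (by simpa using congrArg Subtype.val this)
    -- apply induction hypothesis
    obtain ⟨L', hL'M', hL'iso, hpair1, hpair2⟩ := ih R'' M' hR''rank hR''M' hR''iso hM'nd
    have hL'facts : ∀ y ∈ L', y ∈ M ∧ g e y = 0 ∧ g f y = 0 := by
      intro y hy; exact (hM'mem y).mp (hL'M' hy)
    refine ⟨L' ⊔ (ℝ ∙ f), ?_, ?_, ?_, ?_⟩
    · exact sup_le (le_trans hL'M' hM'M)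
        ((Submodule.span_singleton_le_iff_mem _ _).mpr hfM)
    · -- totally isotropic
      intro x hx y hy
      obtain ⟨x', hx', _, hcx, rfl⟩ := Submodule.mem_sup.mp hx
      obtain ⟨a, rfl⟩ := Submodule.mem_span_singleton.mp hcx
      obtain ⟨y', hy', _, hcy, rfl⟩ := Submodule.mem_sup.mp hy
      obtain ⟨b, rfl⟩ := Submodule.mem_span_singleton.mp hcy
      obtain ⟨_, _, hfx'⟩ := hL'facts x' hx'
      obtain ⟨_, _, hfy'⟩ := hL'facts y' hy'
      have hx'f : g x' f = 0 := by rw [hsy]; exact hfx'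
      simp only [map_add, map_smul, LinearMap.add_apply, LinearMap.smul_apply, smul_eq_mul]
      rw [hL'iso x' hx' y' hy', hx'f, hfy', hff]
      ring
    · -- pairing: R side
      intro x hxR hxy
      have hxf : g x f = 0 :=
        hxy f (le_sup_right (α := Submodule ℝ V) (Submodule.mem_span_singleton_self f))
      have hxR'' : x ∈ R'' := ⟨x, hxR, by rw [hφ, hxf]; simp⟩
      exact hpair1 x hxR'' (fun y hy => hxy y (le_sup_left (α := Submodule ℝ V) hy))
    · -- pairing: L side
      intro y hy hxy
      obtain ⟨y', hy', _, hcy, rfl⟩ := Submodule.mem_sup.mp hy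
      obtain ⟨a, rfl⟩ := Submodule.mem_span_singleton.mp hcy
      obtain ⟨_, hey', _⟩ := hL'facts y' hy'
      have hey : g e (y' + a • f) = 0 := hxy e heR
      have ha : a = 0 := by
        simp only [map_add, map_smul, smul_eq_mul, hef, hey'] at hey
        linarith
      subst ha
      simp only [zero_smul, add_zero] at *
      refine hpair2 y' hy' ?_
      rintro _ ⟨z, hz, rfl⟩
      rw [hφ]
      simp only [map_sub, LinearMap.sub_apply, LinearMap.smul_apply, map_smul, smul_eq_mul]
      rw [hxy z hz, hey']
      ring

theorem exists_lightlike_transversal {V : Type*} [AddCommGroup V] [Module ℝ V]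
    [FiniteDimensional ℝ V] (g : LinearMap.BilinForm ℝ V)
    (hsymm : g.IsSymm) (hnd : g.Nondegenerate)
    (W : Submodule ℝ V) (r : ℕ)
    (hr : finrank ℝ (W ⊓ g.orthogonal W : Submodule ℝ V) = r) :
    ∃ L : Submodule ℝ V, finrank ℝ L = r ∧
      (∀ x ∈ W ⊓ g.orthogonal W, ∀ y ∈ W ⊓ g.orthogonal W, g x y = 0) ∧
      (∀ x ∈ L, ∀ y ∈ L, g x y = 0) ∧
      L ⊓ W = ⊥ ∧
      (∀ x ∈ W ⊓ g.orthogonal W, (∀ y ∈ L, g x y = 0) → x = 0) ∧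
      (∀ y ∈ L, (∀ x ∈ W ⊓ g.orthogonal W, g x y = 0) → y = 0) := by
  have hsy : ∀ x y : V, g x y = g y x := fun x y => by
    have := hsymm.eq x y; simpa using this
  have hrefl : g.IsRefl := hsymm.isRefl
  set R : Submodule ℝ V := W ⊓ g.orthogonal W with hRdef
  have hRiso : ∀ x ∈ R, ∀ y ∈ R, g x y = 0 := by
    intro x hx y hy
    exact hy.2 x hx.1
  -- choose a complement U of R inside W
  obtain ⟨U₀, hU₀⟩ := Submodule.exists_isCompl (R.comap W.subtype)
  set U : Submodule ℝ V := U₀.map W.subtype with hUdef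
  have hUW : U ≤ W := Submodule.map_subtype_le _ _
  have hRW : R ≤ W := inf_le_left
  have hmapR : (R.comap W.subtype).map W.subtype = R := by
    rw [Submodule.map_comap_subtype, inf_eq_right.mpr hRW]
  have hUR_inf : U ⊓ R = ⊥ := by
    rw [hUdef, ← hmapR, ← Submodule.map_inf _ W.injective_subtype, hU₀.symm.inf_eq_bot,
      Submodule.map_bot]
  have hUR_sup : U ⊔ R = W := by
    rw [hUdef, ← hmapR, ← Submodule.map_sup, hU₀.symm.sup_eq_top, Submodule.map_top,
      Submodule.range_subtype]
  -- properties of U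
  have hUorth : ∀ u ∈ U, ∀ ρ ∈ R, g u ρ = 0 := fun u hu ρ hρ => hρ.2 u (hUW hu)
  have hUdisj : Disjoint U (g.orthogonal U) := by
    rw [disjoint_iff]
    rw [eq_bot_iff]
    intro u hu
    obtain ⟨huU, huO⟩ := Submodule.mem_inf.mp hu
    have huW : u ∈ W := hUW huU
    have huWorth : u ∈ g.orthogonal W := by
      intro w hw
      rw [← hUR_sup] at hw
      obtain ⟨u', hu', ρ, hρ, rfl⟩ := Submodule.mem_sup.mp hw
      show g (u' + ρ) u = 0
      rw [map_add, LinearMap.add_apply, huO u' hu',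
        hrefl u ρ (hUorth u huU ρ hρ)]
      ring
    have : u ∈ U ⊓ R := Submodule.mem_inf.mpr ⟨huU, Submodule.mem_inf.mpr ⟨huW, huWorth⟩⟩
    rw [hUR_inf] at this
    exact this
  have hUnd : (g.restrict U).Nondegenerate :=
    g.nondegenerate_restrict_of_disjoint_orthogonal hrefl hUdisj
  -- M = orthogonal of U
  set M : Submodule ℝ V := g.orthogonal U with hMdef
  have hRM : R ≤ M := fun ρ hρ => fun u hu => hUorth u hu ρ hρ
  have hMnd : (g.restrict M).Nondegenerate := by
    apply g.nondegenerate_restrict_of_disjoint_orthogonal hrefl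
    rw [hMdef, LinearMap.BilinForm.orthogonal_orthogonal hnd hrefl]
    exact hUdisj.symm
  obtain ⟨L, hLM, hLiso, hpair1, hpair2⟩ :=
    exists_dual_isotropic g hsymm (finrank ℝ R) R M rfl hRM hRiso hMnd
  have hLW : L ⊓ W = ⊥ := by
    rw [eq_bot_iff]
    intro x hx
    obtain ⟨hxL, hxW⟩ := Submodule.mem_inf.mp hx
    rw [← hUR_sup] at hxW
    obtain ⟨u, huU, ρ, hρ, rfl⟩ := Submodule.mem_sup.mp hxW
    have huM : u ∈ M := by
      have h1 : (u + ρ) ∈ M := hLM hxL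
      have h2 : ρ ∈ M := hRM hρ
      have := M.sub_mem h1 h2
      simpa using this
    have hu0 : u = 0 := by
      have : (⟨u, huU⟩ : U) = 0 := by
        apply hUnd.1
        rintro ⟨u', hu'⟩
        show g u u' = 0
        exact hrefl u' u (huM u' hu')
      simpa using congrArg Subtype.val this
    subst hu0
    simp only [zero_add] at *
    have : ρ = 0 := hpair1 ρ hρ (fun y hy => hLiso ρ hxL y hy)
    simp [this]
  have hLrank : finrank ℝ L = r := by
    have h1 : finrank ℝ R ≤ finrank ℝ L := by
      have hinj : Function.Injective (g.domRestrict₁₂ R L) := by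
        rw [← LinearMap.ker_eq_bot, eq_bot_iff]
        rintro ⟨x, hxR⟩ hx
        rw [LinearMap.mem_ker] at hx
        have hx0 : x = 0 := hpair1 x hxR (fun y hy => by
          have := congrArg (fun F => F ⟨y, hy⟩) hx
          simpa [LinearMap.domRestrict₁₂_apply] using this)
        show (⟨x, hxR⟩ : R) ∈ (⊥ : Submodule ℝ R)
        simp [hx0]
      calc finrank ℝ R ≤ finrank ℝ (L →ₗ[ℝ] ℝ) :=
            LinearMap.finrank_le_finrank_of_injective hinj
        _ = finrank ℝ L := Subspace.dual_finrank_eq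
    have h2 : finrank ℝ L ≤ finrank ℝ R := by
      have hinj : Function.Injective (g.flip.domRestrict₁₂ L R) := by
        rw [← LinearMap.ker_eq_bot, eq_bot_iff]
        rintro ⟨y, hyL⟩ hy
        rw [LinearMap.mem_ker] at hy
        have hy0 : y = 0 := hpair2 y hyL (fun x hx => by
          have := congrArg (fun F => F ⟨x, hx⟩) hy
          simpa [LinearMap.domRestrict₁₂_apply] using this)
        show (⟨y, hyL⟩ : L) ∈ (⊥ : Submodule ℝ L)
        simp [hy0]
      calc finrank ℝ L ≤ finrank ℝ (R →ₗ[ℝ] ℝ) :=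
            LinearMap.finrank_le_finrank_of_injective hinj
        _ = finrank ℝ R := Subspace.dual_finrank_eq
    omega
  exact ⟨L, hLrank, hRiso, hLiso, hLW, hpair1, hpair2⟩
end

section
/- Let V be a finite-dimensional real vector space with nondegenerate symmetric bilinear form g and W a subspace with radical R = W ∩ W^⊥. Choose a nondegenerate complement S of R in W and a nondegenerate complement S' of R in W^⊥ (a 'screen transversal' subspace), and a totally isotropic subspace L dually paired with R as above. Then V decomposes as a direct sum V = S ⊕ S' ⊕ (R ⊕ L), where S, S', and R ⊕ L are mutually g-orthogonal. -/
open Module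

theorem lightlike_decomposition {V : Type*} [AddCommGroup V] [Module ℝ V]
    [FiniteDimensional ℝ V] (g : LinearMap.BilinForm ℝ V)
    (hsymm : g.IsSymm) (hnd : g.Nondegenerate)
    (W R S S' L : Submodule ℝ V)
    (hR : R = W ⊓ g.orthogonal W)
    -- S is a nondegenerate complement of R in W
    (hSW : S ≤ W) (hRS : R ⊓ S = ⊥) (hRSsup : R ⊔ S = W)
    (hSnd : (g.restrict S).Nondegenerate)
    -- S' is a nondegenerate (screen transversal) complement of R in W^⊥
    (hS'W : S' ≤ g.orthogonal W) (hRS' : R ⊓ S' = ⊥) (hRS'sup : R ⊔ S' = g.orthogonal W)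
    (hS'nd : (g.restrict S').Nondegenerate)
    -- L is totally isotropic, dually paired with R, and orthogonal to S and S'
    (hLiso : ∀ x ∈ L, ∀ y ∈ L, g x y = 0)
    (hLS : L ≤ g.orthogonal S ⊓ g.orthogonal S')
    (hpair₁ : ∀ x ∈ R, (∀ y ∈ L, g x y = 0) → x = 0)
    (hpair₂ : ∀ y ∈ L, (∀ x ∈ R, g x y = 0) → y = 0) :
    -- V = S ⊕ S' ⊕ (R ⊕ L), the three factors mutually g-orthogonal
    S ⊔ (S' ⊔ (R ⊔ L)) = ⊤ ∧
      S ⊓ (S' ⊔ (R ⊔ L)) = ⊥ ∧ S' ⊓ (R ⊔ L) = ⊥ ∧ R ⊓ L = ⊥ ∧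
      (∀ x ∈ S, ∀ y ∈ S', g x y = 0) ∧
      (∀ x ∈ S, ∀ y ∈ R ⊔ L, g x y = 0) ∧
      (∀ x ∈ S', ∀ y ∈ R ⊔ L, g x y = 0) := by
  have hrefl := hsymm.isRefl
  -- orthogonality of S and S'
  have oSS' : ∀ x ∈ S, ∀ y ∈ S', g x y = 0 := fun x hx y hy => hS'W hy x (hSW hx)
  -- orthogonality of S and R ⊔ L
  have hRW' : R ≤ g.orthogonal W := by rw [hR]; exact inf_le_right
  have hRW : R ≤ W := by rw [hR]; exact inf_le_left
  have oSRL : ∀ x ∈ S, ∀ y ∈ R ⊔ L, g x y = 0 := by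
    intro x hx y hy
    have h : R ⊔ L ≤ LinearMap.ker (g x) :=
      sup_le (fun z hz => hRW' hz x (hSW hx)) (fun z hz => (hLS hz).1 x hx)
    exact h hy
  -- orthogonality of S' and R ⊔ L
  have oS'RL : ∀ x ∈ S', ∀ y ∈ R ⊔ L, g x y = 0 := by
    intro x hx y hy
    have h : R ⊔ L ≤ LinearMap.ker (g x) :=
      sup_le (fun z hz => hrefl z x (hS'W hx z (hRW hz))) (fun z hz => (hLS hz).2 x hx)
    exact h hy
  -- R ⊓ L = ⊥
  have hRL : R ⊓ L = ⊥ := by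
    rw [Submodule.eq_bot_iff]
    rintro x ⟨hxR, hxL⟩
    exact hpair₁ x hxR (fun y hy => hLiso x hxL y hy)
  -- S' ⊓ (R ⊔ L) = ⊥
  have hS'RL : S' ⊓ (R ⊔ L) = ⊥ := by
    rw [Submodule.eq_bot_iff]
    rintro x ⟨hx1, hx2⟩
    have : (⟨x, hx1⟩ : S') = 0 :=
      hS'nd.1 ⟨x, hx1⟩ (fun n => hrefl _ _ (oS'RL n n.2 x hx2))
    exact congrArg Subtype.val this
  -- S ⊓ (S' ⊔ (R ⊔ L)) = ⊥
  have hSrest : S ⊓ (S' ⊔ (R ⊔ L)) = ⊥ := by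
    rw [Submodule.eq_bot_iff]
    rintro x ⟨hx1, hx2⟩
    have key : ∀ n ∈ S, g n x = 0 := by
      intro n hn
      have h : S' ⊔ (R ⊔ L) ≤ LinearMap.ker (g n) :=
        sup_le (fun z hz => oSS' n hn z hz) (fun z hz => oSRL n hn z hz)
      exact h hx2
    have : (⟨x, hx1⟩ : S) = 0 :=
      hSnd.1 ⟨x, hx1⟩ (fun n => hrefl _ _ (key n n.2))
    exact congrArg Subtype.val this
  -- dimension count for the sup = ⊤
  have hLR : finrank ℝ L = finrank ℝ R := by
    have f₁ : Function.Injective (g.domRestrict₁₂ R L) := by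
      rw [injective_iff_map_eq_zero]
      intro a ha
      ext
      exact hpair₁ a a.2 (fun y hy => by
        simpa [LinearMap.domRestrict₁₂_apply] using LinearMap.congr_fun ha ⟨y, hy⟩)
    have f₂ : Function.Injective ((g.flip).domRestrict₁₂ L R) := by
      rw [injective_iff_map_eq_zero]
      intro a ha
      ext
      exact hpair₂ a a.2 (fun x hx => by
        simpa [LinearMap.domRestrict₁₂_apply] using LinearMap.congr_fun ha ⟨x, hx⟩)
    have h₁ : finrank ℝ R ≤ finrank ℝ (Module.Dual ℝ L) :=
      LinearMap.finrank_le_finrank_of_injective f₁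
    have h₂ : finrank ℝ L ≤ finrank ℝ (Module.Dual ℝ R) :=
      LinearMap.finrank_le_finrank_of_injective f₂
    rw [Subspace.dual_finrank_eq] at h₁ h₂
    omega
  have horth : finrank ℝ (g.orthogonal W) = finrank ℝ V - finrank ℝ W :=
    LinearMap.BilinForm.finrank_orthogonal hnd W
  have hWle : finrank ℝ W ≤ finrank ℝ V := Submodule.finrank_le W
  have hdimW : finrank ℝ R + finrank ℝ S = finrank ℝ W := by
    have := Submodule.finrank_sup_add_finrank_inf_eq R S
    rw [hRSsup, hRS, finrank_bot] at this
    omega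
  have hdimW' : finrank ℝ R + finrank ℝ S' = finrank ℝ (g.orthogonal W) := by
    have := Submodule.finrank_sup_add_finrank_inf_eq R S'
    rw [hRS'sup, hRS', finrank_bot] at this
    omega
  have hdRL : finrank ℝ (R ⊔ L : Submodule ℝ V) = finrank ℝ R + finrank ℝ L := by
    have := Submodule.finrank_sup_add_finrank_inf_eq R L
    rw [hRL, finrank_bot] at this
    omega
  have hdS'RL : finrank ℝ (S' ⊔ (R ⊔ L) : Submodule ℝ V)
      = finrank ℝ S' + finrank ℝ (R ⊔ L : Submodule ℝ V) := by
    have := Submodule.finrank_sup_add_finrank_inf_eq S' (R ⊔ L)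
    rw [hS'RL, finrank_bot] at this
    omega
  have hdTot : finrank ℝ (S ⊔ (S' ⊔ (R ⊔ L)) : Submodule ℝ V)
      = finrank ℝ S + finrank ℝ (S' ⊔ (R ⊔ L) : Submodule ℝ V) := by
    have := Submodule.finrank_sup_add_finrank_inf_eq S (S' ⊔ (R ⊔ L))
    rw [hSrest, finrank_bot] at this
    omega
  have htop : S ⊔ (S' ⊔ (R ⊔ L)) = ⊤ := by
    apply Submodule.eq_top_of_finrank_eq
    rw [hdTot, hdS'RL, hdRL]
    omega
  exact ⟨htop, hSrest, hS'RL, hRL, oSS', oSRL, oS'RL⟩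
end
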